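/- Consider any two finite simple graphs G' = (V, E'), G'' = (V, E'') on the same vertex set V and weight functions w' : E' → [0, 1], w'' : E'' → [0, 1] such that w''(x) > 0 for every vertex x that is an endpoint of some edge in E'. Define w̃ : E' → [0, 1] by w̃(u, v) = w'(u, v) / max(1, w'(u)/w''(u), w'(v)/w''(v)) for every edge (u, v) ∈ E'. Then size(w') − size(w̃) ≤ dist_V(w', w''). -/
import Mathlib


open Finset

namespace Stmt10

variable {V : Type*}

/-- Total size of a weight function on the edges of `G`. -/
noncomputable def size (G : SimpleGraph V) [Fintype V] [DecidableEq V] [DecidableRel G.Adj]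
    (w : Sym2 V → ℝ) : ℝ :=
  ∑ e ∈ G.edgeFinset, w e

/-- Total weight received by a vertex `v` from the edges of `G` incident on it. -/
noncomputable def vertexWeight (G : SimpleGraph V) [Fintype V] [DecidableEq V]
    [DecidableRel G.Adj] (w : Sym2 V → ℝ) (v : V) : ℝ :=
  ∑ e ∈ G.edgeFinset.filter (fun e => v ∈ e), w e

/-- The distance `dist_V(w₁, w₂) = ∑_{v ∈ V} |w₁(v) - w₂(v)|` between two weight
functions defined on graphs sharing the vertex set `V`. -/
noncomputable def distV (G₁ G₂ : SimpleGraph V) [Fintype V] [DecidableEq V]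
    [DecidableRel G₁.Adj] [DecidableRel G₂.Adj] (w₁ w₂ : Sym2 V → ℝ) : ℝ :=
  ∑ v : V, |vertexWeight G₁ w₁ v - vertexWeight G₂ w₂ v|

/-- Suppose `w₂(x) > 0` for every vertex `x` that is an endpoint of an edge of `G₁`,
and define `w̃(u,v) = w₁(u,v) / max(1, w₁(u)/w₂(u), w₁(v)/w₂(v))` on every edge of
`G₁`.  Then `size(w₁) - size(w̃) ≤ dist_V(w₁, w₂)`. -/
theorem size_sub_scaled_le_distV (G₁ G₂ : SimpleGraph V) [Fintype V] [DecidableEq V]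
    [DecidableRel G₁.Adj] [DecidableRel G₂.Adj]
    (w₁ w₂ : Sym2 V → ℝ)
    (hw₁ : ∀ e ∈ G₁.edgeFinset, 0 ≤ w₁ e ∧ w₁ e ≤ 1)
    (hw₂ : ∀ e ∈ G₂.edgeFinset, 0 ≤ w₂ e ∧ w₂ e ≤ 1)
    (hpos : ∀ x : V, (∃ e ∈ G₁.edgeFinset, x ∈ e) → 0 < vertexWeight G₂ w₂ x)
    (wt : Sym2 V → ℝ)
    (hwt : ∀ u v : V, G₁.Adj u v →
      wt s(u, v) = w₁ s(u, v) /
        max 1 (max (vertexWeight G₁ w₁ u / vertexWeight G₂ w₂ u)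
          (vertexWeight G₁ w₁ v / vertexWeight G₂ w₂ v))) :
    size G₁ w₁ - size G₁ wt ≤ distV G₁ G₂ w₁ w₂ := by
  classical
  set d : V → ℝ := vertexWeight G₁ w₁ with hd
  set d₂ : V → ℝ := vertexWeight G₂ w₂ with hd₂
  set g : V → ℝ := fun x => if 0 < d x then max (d x - d₂ x) 0 / d x else 0 with hg
  have hg0 : ∀ x, 0 ≤ g x := by
    intro x
    simp only [hg]
    split_ifs with h
    · exact div_nonneg (le_max_right _ _) h.le
    · exact le_refl 0
  have key : ∀ e ∈ G₁.edgeFinset, w₁ e - wt e ≤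
      ∑ x ∈ univ.filter (fun x => x ∈ e), w₁ e * g x := by
    intro e he
    induction e using Sym2.inductionOn with
    | hf u v =>
      have hadj : G₁.Adj u v := by simpa [SimpleGraph.mem_edgeFinset] using he
      have hne : u ≠ v := hadj.ne
      have hfil : univ.filter (fun x => x ∈ s(u, v)) = ({u, v} : Finset V) := by
        ext x; simp [Sym2.mem_iff]
      rw [hfil, Finset.sum_pair hne, hwt u v hadj]
      set M := max 1 (max (vertexWeight G₁ w₁ u / vertexWeight G₂ w₂ u)
          (vertexWeight G₁ w₁ v / vertexWeight G₂ w₂ v)) with hM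
      have hM1 : (1 : ℝ) ≤ M := le_max_left _ _
      have hMpos : (0 : ℝ) < M := lt_of_lt_of_le one_pos hM1
      have hw0 : 0 ≤ w₁ s(u, v) := (hw₁ _ he).1
      have hsub : ∀ x : V, x ∈ s(u, v) → d x / d₂ x = M → 1 < M → 1 - 1 / M ≤ g x := by
        intro x hx hxM hM1'
        have hd₂pos : 0 < d₂ x := hpos x ⟨s(u, v), he, hx⟩
        have hdx : d₂ x < d x := by
          have : 1 < d x / d₂ x := hxM ▸ hM1'
          rwa [lt_div_iff₀ hd₂pos, one_mul] at this
        have hdxpos : 0 < d x := lt_trans hd₂pos hdx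
        have hgx : g x = (d x - d₂ x) / d x := by
          simp only [hg]
          rw [if_pos hdxpos, max_eq_left (by linarith)]
        rw [hgx, ← hxM, one_div_div]
        have : 1 - d₂ x / d x = (d x - d₂ x) / d x := by
          field_simp
        rw [this]
      have hgoal : 1 - 1 / M ≤ g u + g v := by
        rcases eq_or_lt_of_le hM1 with hM1' | hM1'
        · rw [← hM1']
          simpa using add_nonneg (hg0 u) (hg0 v)
        · have hXM : max (d u / d₂ u) (d v / d₂ v) = M := by
            rw [hM]
            exact (max_eq_right (by
              by_contra hc
              push_neg at hc
              have : M ≤ 1 := by rw [hM]; exact max_le le_rfl hc.le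
              linarith)).symm
          rcases le_total (d u / d₂ u) (d v / d₂ v) with hle | hle
          · have h1 : d v / d₂ v = M := by rw [← hXM, max_eq_right hle]
            have := hsub v (by simp) h1 hM1'
            linarith [hg0 u]
          · have h1 : d u / d₂ u = M := by rw [← hXM, max_eq_left hle]
            have := hsub u (by simp) h1 hM1'
            linarith [hg0 v]
      have hmul := mul_le_mul_of_nonneg_left hgoal hw0
      rw [mul_sub, mul_one, mul_one_div, mul_add] at hmul
      linarith
  have h1 : size G₁ w₁ - size G₁ wt = ∑ e ∈ G₁.edgeFinset, (w₁ e - wt e) := by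
    simp [size, Finset.sum_sub_distrib]
  rw [h1]
  calc ∑ e ∈ G₁.edgeFinset, (w₁ e - wt e)
      ≤ ∑ e ∈ G₁.edgeFinset, ∑ x ∈ univ.filter (fun x => x ∈ e), w₁ e * g x :=
        Finset.sum_le_sum key
    _ = ∑ x : V, ∑ e ∈ G₁.edgeFinset.filter (fun e => x ∈ e), w₁ e * g x := by
        simp_rw [Finset.sum_filter]
        exact Finset.sum_comm
    _ = ∑ x : V, g x * d x := by
        refine Finset.sum_congr rfl fun x _ => ?_
        rw [← Finset.sum_mul, mul_comm]
        rfl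
    _ ≤ ∑ x : V, |d x - d₂ x| := by
        refine Finset.sum_le_sum fun x _ => ?_
        simp only [hg]
        split_ifs with h
        · rw [div_mul_cancel₀ _ h.ne']
          exact max_le (le_abs_self _) (abs_nonneg _)
        · simpa using abs_nonneg (d x - d₂ x)
    _ = distV G₁ G₂ w₁ w₂ := rfl

end Stmt10
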